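/- Define real coefficients α(n,k,i), for natural numbers n, k, i with 2k ≤ n and 2i ≤ 2k, by the recurrence α(n,k,i) = 2^{k+i} · (n−k+i−1/2)^{\underline{k−i}} · (n−k)^{\underline{i}} · (n−2k+2i−1/2)^{\underline{2i}} / ((2i)^{\underline{2i}} · (n−k+i−1/2)^{\underline{i}}) − Σ_{l=0}^{i−1} ( (2(n−2k+i−l))^{\underline{2(i−l)}} / (2(i−l))^{\underline{2(i−l)}} ) · α(n, k−i+l, l), where x^{\underline{m}} = x(x−1)⋯(x−m+1) is the falling factorial with x^{\underline{0}} = 1, and set b(λ,n,k) = Σ_{i=0}^{max(k−1,0)} (λ^{n−2k+2i} / (2^{k−i} (k−i)!)) · (λ²−1)^{k−i} · α(n,k,i). Then for every natural number n, every real number λ, and every real x, P_n(λx) = Σ_{k=0}^{⌊n/2⌋} b(λ,n,k) · P_{n−2k}(x). -/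

import Mathlib

/-- Legendre polynomial via Rodrigues' formula. -/
noncomputable def legendre (n : ℕ) : ℝ → ℝ :=
  fun x => (1 / (2 ^ n * (n.factorial : ℝ))) * iteratedDeriv n (fun y => (y ^ 2 - 1) ^ n) x

/-- Falling factorial of a real number: `x^{(m)} = x (x-1) ⋯ (x-m+1)`. -/
noncomputable def fallingFactorial (x : ℝ) (m : ℕ) : ℝ := ∏ i ∈ Finset.range m, (x - i)

open Polynomial Finset

noncomputable def Rod (n : ℕ) : ℝ[X] :=
  C (1 / (2 ^ n * (n.factorial : ℝ))) * derivative^[n] ((X ^ 2 - 1) ^ n)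


lemma ff_zero (x : ℝ) : fallingFactorial x 0 = 1 := by simp [fallingFactorial]

lemma ff_succ (x : ℝ) (r : ℕ) :
    fallingFactorial x (r + 1) = fallingFactorial x r * (x - r) :=
  Finset.prod_range_succ _ _

lemma fact_ne (n : ℕ) : ((n.factorial : ℝ)) ≠ 0 := by
  exact_mod_cast n.factorial_ne_zero

lemma ff_nat : ∀ (r b : ℕ), fallingFactorial ((b : ℝ) + r) r * (b.factorial : ℝ) =
    ((b + r).factorial : ℝ) := by
  intro r
  induction r with
  | zero => intro b; simp [ff_zero]
  | succ r ih =>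
    intro b
    have h := ih (b + 1)
    have harg : ((b : ℝ) + (r + 1 : ℕ)) = (((b+1 : ℕ) : ℝ) + r) := by push_cast; ring
    rw [ff_succ, harg]
    have hsub : (((b+1:ℕ):ℝ) + r - r) = (b : ℝ) + 1 := by push_cast; ring
    rw [hsub]
    have hf : (((b+1).factorial : ℝ)) = ((b:ℝ)+1) * b.factorial := by
      rw [Nat.factorial_succ]; push_cast; ring
    have hgoal : (b + (r+1)) = (b + 1) + r := by omega
    rw [hgoal]
    rw [← h, hf]
    ring

lemma ff_nat_div (r b : ℕ) : fallingFactorial ((b : ℝ) + r) r =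
    ((b + r).factorial : ℝ) / (b.factorial : ℝ) := by
  rw [eq_div_iff (fact_ne b)]; exact ff_nat r b

lemma ff_half : ∀ (r b : ℕ), (4:ℝ)^r * ((b+r).factorial : ℝ) * ((2*b).factorial : ℝ) *
    fallingFactorial ((b : ℝ) + r - 1/2) r = ((2*(b+r)).factorial : ℝ) * (b.factorial : ℝ) := by
  intro r
  induction r with
  | zero => intro b; simp [ff_zero]; try ring
  | succ r ih =>
    intro b
    have h := ih (b + 1)
    have harg : ((b : ℝ) + (r + 1 : ℕ) - 1/2) = (((b+1 : ℕ) : ℝ) + r - 1/2) := by push_cast; ring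
    rw [ff_succ, harg]
    have hF : fallingFactorial (((b+1:ℕ):ℝ) + r - 1/2) r =
        ((2*((b+1)+r)).factorial : ℝ) * ((b+1).factorial : ℝ) /
          ((4:ℝ)^r * (((b+1)+r).factorial : ℝ) * ((2*(b+1)).factorial : ℝ)) := by
      rw [eq_div_iff (by positivity)]
      linarith [h]
    rw [hF]
    have e1 : b + (r+1) = (b+1) + r := by omega
    have e2 : 2*(b+1) = (2*b+1)+1 := by omega
    rw [e1, e2]
    have hf1 : (((2*b+1)+1).factorial : ℝ) = ((2:ℝ)*b+2)*((2:ℝ)*b+1)*((2*b).factorial : ℝ) := by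
      rw [Nat.factorial_succ, Nat.factorial_succ]; push_cast; ring
    have hf2 : (((b+1)).factorial : ℝ) = ((b:ℝ)+1)*(b.factorial : ℝ) := by
      rw [Nat.factorial_succ]; push_cast; ring
    have hsub : ((((b+1):ℕ):ℝ) + r - 1/2 - r) = (b:ℝ) + 1/2 := by push_cast; ring
    rw [hsub, hf1, hf2]
    have h4 : (4:ℝ)^(r+1) = 4 * 4^r := by ring
    rw [h4]
    field_simp
    ring


lemma iteratedDeriv_polyeval (k : ℕ) : ∀ (p : ℝ[X]) (x : ℝ),
    iteratedDeriv k (fun y => p.eval y) x = (derivative^[k] p).eval x := by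
  induction k with
  | zero => intro p x; simp
  | succ k ih =>
    intro p x
    rw [iteratedDeriv_succ']
    have : (deriv fun y => p.eval y) = fun y => p.derivative.eval y := by
      funext y; exact Polynomial.deriv (p := p)
    rw [this, ih, Function.iterate_succ_apply]

lemma legendre_eq_Rod (n : ℕ) (x : ℝ) : legendre n x = (Rod n).eval x := by
  unfold legendre Rod
  have : (fun y : ℝ => (y ^ 2 - 1) ^ n) = fun y => (((X:ℝ[X]) ^ 2 - 1) ^ n).eval y := by
    funext y; simp
  rw [this, iteratedDeriv_polyeval]
  simp

lemma natDegree_Rod_le (m : ℕ) : (Rod m).natDegree ≤ m := by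
  unfold Rod
  refine (natDegree_C_mul_le _ _).trans ?_
  refine (Polynomial.natDegree_iterate_derivative _ _).trans ?_
  have : ((X:ℝ[X]) ^ 2 - 1).natDegree ≤ 2 := by
    refine (natDegree_sub_le _ _).trans ?_
    simp [natDegree_X_pow]
  have h2 : (((X:ℝ[X]) ^ 2 - 1) ^ m).natDegree ≤ 2 * m := by
    refine (natDegree_pow_le).trans ?_
    calc m * ((X:ℝ[X])^2-1).natDegree ≤ m * 2 := Nat.mul_le_mul_left m this
      _ = 2 * m := by ring
  omega

-- parity: coefficients of Rod m vanish in degrees of parity different from m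
lemma coeff_parity_even (m : ℕ) : ∀ r, r % 2 = 1 → (((X:ℝ[X])^2-1)^m).coeff r = 0 := by
  induction m with
  | zero =>
    intro r hr
    rcases r with _|r
    · simp at hr
    · simp [coeff_one]
  | succ m ih =>
    intro r hr
    have : ((X:ℝ[X])^2-1)^(m+1) = ((X:ℝ[X])^2-1)^m * X^2 - ((X:ℝ[X])^2-1)^m := by ring
    rw [this, coeff_sub, coeff_mul_X_pow', ih r hr]
    split_ifs with h
    · rw [ih (r-2) (by omega)]; ring
    · ring

lemma coeff_deriv_parity {p : ℝ[X]} {e : ℕ} (hp : ∀ r, r % 2 ≠ e % 2 → p.coeff r = 0) :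
    ∀ r, r % 2 ≠ (e+1) % 2 → p.derivative.coeff r = 0 := by
  intro r hr
  rw [coeff_derivative]
  rw [hp (r+1) (by omega)]
  ring

lemma coeff_Rod_parity (m : ℕ) : ∀ r, r % 2 ≠ m % 2 → (Rod m).coeff r = 0 := by
  have key : ∀ (k : ℕ) (p : ℝ[X]) (e : ℕ), (∀ r, r % 2 ≠ e % 2 → p.coeff r = 0) →
      (∀ r, r % 2 ≠ (e+k) % 2 → (derivative^[k] p).coeff r = 0) := by
    intro k
    induction k with
    | zero => intro p e hp r; simpa using hp r
    | succ k ih =>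
      intro p e hp r hr
      rw [Function.iterate_succ_apply]
      exact ih p.derivative (e+1) (coeff_deriv_parity hp) r (by omega)
  intro r hr
  unfold Rod
  rw [coeff_C_mul]
  have h0 : ∀ r', r' % 2 ≠ 0 % 2 → (((X:ℝ[X])^2-1)^m).coeff r' = 0 := by
    intro r' h; exact coeff_parity_even m r' (by omega)
  rw [key m _ 0 h0 r (by omega)]
  ring

lemma deriv_Rod_one (b r : ℕ) :
    (derivative^[r] (Rod (b + r))).eval 1 =
      ((b + 2*r).factorial : ℝ) / (2^r * (r.factorial : ℝ) * (b.factorial : ℝ)) := by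
  set m := b + r with hm
  unfold Rod
  rw [Polynomial.iterate_derivative_C_mul, ← Function.iterate_add_apply]
  have hsplit : ((X:ℝ[X]) ^ 2 - 1) ^ m = (X + C 1) ^ m * (X + C (-1)) ^ m := by
    rw [← mul_pow]; congr 1
    rw [C_neg, C_1]; ring
  rw [hsplit, Polynomial.iterate_derivative_mul]
  rw [eval_mul, eval_C, eval_finset_sum]
  rw [Finset.sum_eq_single_of_mem m (by simp [Nat.succ_eq_add_one]) ?hside]
  case hside =>
    intro k _ hk
    rw [Polynomial.iterate_derivative_X_add_pow, Polynomial.iterate_derivative_X_add_pow]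
    simp only [eval_smul, smul_eq_mul, eval_mul, eval_pow, eval_add, eval_X, eval_C,
      nsmul_eq_mul, eval_natCast, eval_mul, eval_one]
    rcases lt_or_gt_of_ne hk with h | h
    · have hz : ((1:ℝ) + (-1)) ^ (m - k) = 0 := by
        rw [show (1:ℝ) + (-1) = 0 from by norm_num]
        exact zero_pow (by omega)
      rw [hz]; ring
    · have : m.descFactorial k = 0 := Nat.descFactorial_eq_zero_iff_lt.mpr h
      rw [this]; push_cast; ring
  rw [Nat.add_sub_cancel  ,Polynomial.iterate_derivative_X_add_pow,
    Polynomial.iterate_derivative_X_add_pow]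
  have h1 : ((X + C (-1) : ℝ[X]) ^ (m - m)) = 1 := by rw [Nat.sub_self, pow_zero]
  rw [h1]
  have h2 : m - r = b := by omega
  rw [h2]
  simp only [smul_mul_assoc, eval_smul, eval_mul, eval_smul, smul_eq_mul, eval_pow, eval_add,
    eval_X, eval_C, eval_one, mul_one]
  norm_num
  -- now pure arithmetic
  have hb : m.descFactorial m = m.factorial := Nat.descFactorial_self m
  rw [hb]
  have key : ((r + m).choose m) * (m.descFactorial r) * (r.factorial * b.factorial) =
      (b + 2*r).factorial := by
    have hA : (r + m).choose m * m.factorial * r.factorial = (r + m).factorial := by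
      have := Nat.choose_mul_factorial_mul_factorial (n := r + m) (k := m) (by omega)
      simpa [show r + m - m = r from by omega] using this
    have hd : m.descFactorial r = r.factorial * m.choose r :=
      Nat.descFactorial_eq_factorial_mul_choose _ _
    have hC : m.choose r * r.factorial * b.factorial = m.factorial := by
      have := Nat.choose_mul_factorial_mul_factorial (n := m) (k := r) (by omega)
      simpa [show m - r = b from by omega] using this
    calc (r+m).choose m * m.descFactorial r * (r.factorial * b.factorial)
        = (r+m).choose m * r.factorial * (m.choose r * r.factorial * b.factorial) := by
          rw [hd]; ring
      _ = (r+m).choose m * m.factorial * r.factorial := by rw [hC]; ring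
      _ = (r+m).factorial := hA
      _ = (b+2*r).factorial := by congr 1; omega
  have hkey : (((r + m).choose m : ℝ)) * ((m.descFactorial r : ℝ)) *
      ((r.factorial : ℝ) * (b.factorial : ℝ)) = ((b + 2*r).factorial : ℝ) := by
    exact_mod_cast congrArg (Nat.cast : ℕ → ℝ) key
  have hm2 : (2:ℝ)^m = 2^b * 2^r := by rw [hm]; rw [pow_add]
  rw [hm2]
  field_simp
  linear_combination hkey

lemma coeff_top_eq_zero {q : ℝ[X]} {N : ℕ} (hdeg : q.natDegree ≤ N)
    (hN : (derivative^[N] q).eval 1 = 0) : q.coeff N = 0 := by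
  have h0 : (derivative^[N] q) = C ((derivative^[N] q).coeff 0) :=
    eq_C_of_natDegree_le_zero (le_trans (Polynomial.natDegree_iterate_derivative _ _) (by omega))
  rw [h0, eval_C, Polynomial.coeff_iterate_derivative] at hN
  simpa [Nat.descFactorial_self, Nat.factorial_ne_zero] using hN

lemma key_unique : ∀ (N : ℕ) (q : ℝ[X]), q.natDegree ≤ N →
    (∀ r, r % 2 ≠ N % 2 → q.coeff r = 0) →
    (∀ μ, μ ≤ N → μ % 2 = N % 2 → (derivative^[μ] q).eval 1 = 0) → q = 0 := by
  intro N
  induction N using Nat.strong_induction_on with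
  | _ N ih =>
    intro q hdeg hpar hder
    have hcN : q.coeff N = 0 := coeff_top_eq_zero hdeg (hder N le_rfl rfl)
    match N, ih, hdeg, hpar, hder, hcN with
    | 0, ih, hdeg, hpar, hder, hcN =>
      rw [eq_C_of_natDegree_le_zero hdeg, hcN, map_zero]
    | 1, ih, hdeg, hpar, hder, hcN =>
      ext m
      rcases m with _|_|m
      · simpa using hpar 0 (by omega)
      · simpa using hcN
      · simp only [coeff_zero]
        exact natDegree_le_iff_coeff_eq_zero.mp hdeg _ (by omega)
    | (N+2), ih, hdeg, hpar, hder, hcN =>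
      have hc1 : q.coeff (N+1) = 0 := hpar (N+1) (by omega)
      have hdeg' : q.natDegree ≤ N := by
        rw [natDegree_le_iff_coeff_eq_zero]
        intro M hM
        rcases (by omega : M = N + 1 ∨ M = N + 2 ∨ N + 2 < M) with h|h|h
        · rw [h]; exact hc1
        · rw [h]; exact hcN
        · exact natDegree_le_iff_coeff_eq_zero.mp hdeg _ h
      exact ih N (by omega) q hdeg'
        (fun r hr => hpar r (by omega))
        (fun μ hμ hp => hder μ (by omega) (by omega))

lemma ff_half_div (r b : ℕ) : fallingFactorial ((b : ℝ) + r - 1/2) r =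
    ((2*(b+r)).factorial : ℝ) * (b.factorial : ℝ) /
      ((2:ℝ)^(2*r) * ((b+r).factorial : ℝ) * ((2*b).factorial : ℝ)) := by
  rw [eq_div_iff (by positivity)]
  have h4 : (4:ℝ)^r = 2^(2*r) := by
    rw [show (4:ℝ) = 2^2 from by norm_num, ← pow_mul]
  linear_combination ff_half r b - ((b+r).factorial : ℝ) * ((2*b).factorial : ℝ) *
    fallingFactorial ((b : ℝ) + r - 1/2) r * h4

lemma ff_cast_nat (a : ℕ) : fallingFactorial ((a : ℕ) : ℝ) a = (a.factorial : ℝ) := by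
  have := ff_nat a 0
  simpa using this

lemma Tval (d j e : ℕ) :
    2 ^ ((d + j) + j) * fallingFactorial (((2*j+e : ℕ) : ℝ) + d - 1/2) d *
        fallingFactorial (((d+e : ℕ) : ℝ) + j) j *
        fallingFactorial (((e : ℕ) : ℝ) + (2*j : ℕ) - 1/2) (2*j) /
      (fallingFactorial (((2*j : ℕ) : ℕ) : ℝ) (2*j) *
        fallingFactorial (((d+j+e : ℕ) : ℝ) + j - 1/2) j) *
      (((2*e).factorial : ℝ) / (2^e * (e.factorial : ℝ)))
    = ((2*(d+j+e)).factorial : ℝ) / (2^(d+e) * ((d+e).factorial : ℝ) * ((2*j).factorial : ℝ)) := by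
  rw [ff_half_div d (2*j+e), ff_nat_div j (d+e), ff_half_div (2*j) e, ff_cast_nat,
    ff_half_div j (d+j+e)]
  field_simp
  ring_nf

theorem legB (α : ℕ → ℕ → ℕ → ℝ)
    (hα : ∀ n k i : ℕ, 2 * k ≤ n → 2 * i ≤ 2 * k →
      α n k i =
        2 ^ (k + i) * fallingFactorial ((n : ℝ) - k + i - 1 / 2) (k - i) *
            fallingFactorial ((n : ℝ) - k) i *
            fallingFactorial ((n : ℝ) - 2 * k + 2 * i - 1 / 2) (2 * i) /
          (fallingFactorial ((2 * i : ℕ) : ℝ) (2 * i) *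
            fallingFactorial ((n : ℝ) - k + i - 1 / 2) i) -
        ∑ l ∈ Finset.range i,
          (fallingFactorial (2 * ((n : ℝ) - 2 * k + i - l)) (2 * (i - l)) /
              fallingFactorial (2 * ((i : ℝ) - l)) (2 * (i - l))) * α n (k - i + l) l)
    (n d : ℕ) (hd : 2*d ≤ n) :
    derivative^[d] (Rod (n - d)) =
      ∑ l ∈ range ((n - 2*d)/2 + 1), α n (d+l) l • Rod (n - 2*d - 2*l) := by
  rw [← sub_eq_zero]
  apply key_unique (n - 2*d)
  · refine (natDegree_sub_le _ _).trans (max_le ?_ ?_)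
    · refine (Polynomial.natDegree_iterate_derivative _ _).trans ?_
      have := natDegree_Rod_le (n - d)
      omega
    · apply natDegree_sum_le_of_forall_le
      intro l hl
      refine (natDegree_smul_le _ _).trans ((natDegree_Rod_le _).trans ?_)
      omega
  · intro r hr
    rw [coeff_sub, Polynomial.coeff_iterate_derivative, finset_sum_coeff]
    rw [coeff_Rod_parity (n - d) (r + d) (by omega)]
    have : ∀ l ∈ range ((n - 2*d)/2 + 1), (α n (d+l) l • Rod (n - 2*d - 2*l)).coeff r = 0 := by
      intro l hl
      rw [coeff_smul, coeff_Rod_parity (n - 2*d - 2*l) r (by simp at hl; omega), smul_zero]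
    rw [Finset.sum_eq_zero this]
    simp
  · intro μ hμ hpμ
    -- μ = (n - 2d) - 2j
    obtain ⟨j, hj⟩ : ∃ j, n - 2*d = μ + 2*j := ⟨(n - 2*d - μ)/2, by omega⟩
    have hn : n = 2*d + 2*j + μ := by omega
    rw [Polynomial.iterate_derivative_sub, Polynomial.iterate_derivative_sum, eval_sub,
      eval_finset_sum, sub_eq_zero]
    -- LHS value
    rw [← Function.iterate_add_apply, show n - d = 2*j + (μ + d) from by omega,
      deriv_Rod_one (2*j) (μ + d)]
    -- truncate sum
    have hzero : ∀ l ∈ range ((n - 2*d)/2 + 1), l ∉ range (j+1) →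
        (derivative^[μ] (α n (d+l) l • Rod (n - 2*d - 2*l))).eval 1 = 0 := by
      intro l hl hnl
      simp only [mem_range] at hl hnl
      rw [Polynomial.iterate_derivative_smul,
        Polynomial.iterate_derivative_eq_zero (lt_of_le_of_lt (natDegree_Rod_le _) (by omega)),
        smul_zero, eval_zero]
    rw [← Finset.sum_subset (Finset.range_subset_range.mpr (by omega : j + 1 ≤ (n - 2*d)/2 + 1)) hzero]
    rw [Finset.sum_range_succ]
    simp only [Polynomial.iterate_derivative_smul, eval_smul, smul_eq_mul]
    -- rewrite the values of the Rod evaluations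
    have hRl : ∀ l, l < j → (derivative^[μ] (Rod (n - 2*d - 2*l))).eval 1 =
        ((2*(j-l) + 2*μ).factorial : ℝ) / (2^μ * (μ.factorial : ℝ) * ((2*(j-l)).factorial : ℝ)) := by
      intro l hl
      rw [show n - 2*d - 2*l = 2*(j-l) + μ from by omega, deriv_Rod_one (2*(j-l)) μ]
    have hRj : (derivative^[μ] (Rod (n - 2*d - 2*j))).eval 1 =
        ((2*μ).factorial : ℝ) / (2^μ * (μ.factorial : ℝ)) := by
      rw [show n - 2*d - 2*j = 0 + μ from by omega, deriv_Rod_one 0 μ]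
      norm_num
    rw [hRj]
    rw [hα n (d+j) j (by omega) (by omega)]
    simp only [Nat.add_sub_cancel]
    have hc1 : fallingFactorial ((n:ℝ) - ↑(d + j) + ↑j - 1 / 2) d =
        fallingFactorial (((2*j+μ : ℕ) : ℝ) + ↑d - 1/2) d := by
      congr 1; push_cast [hn]; ring
    have hc2 : fallingFactorial ((n:ℝ) - ↑(d + j)) j =
        fallingFactorial (((d+μ : ℕ) : ℝ) + ↑j) j := by
      congr 1; push_cast [hn]; ring
    have hc3 : fallingFactorial ((n:ℝ) - 2 * ↑(d + j) + 2 * ↑j - 1 / 2) (2*j) =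
        fallingFactorial (((μ : ℕ) : ℝ) + ((2*j : ℕ) : ℝ) - 1/2) (2*j) := by
      congr 1; push_cast [hn]; ring
    have hc5 : fallingFactorial ((n:ℝ) - ↑(d + j) + ↑j - 1 / 2) j =
        fallingFactorial (((d+j+μ : ℕ) : ℝ) + ↑j - 1/2) j := by
      congr 1; push_cast [hn]; ring
    rw [hc1, hc2, hc3, hc5]
    have hT := Tval d j μ
    have hfirst : ∑ x ∈ range j, α n (d + x) x *
          (derivative^[μ] (Rod (n - 2 * d - 2 * x))).eval 1 =
        ∑ x ∈ range j, α n (d + x) x *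
          ((2*(j-x) + 2*μ).factorial / (2^μ * (μ.factorial : ℝ) * ((2*(j-x)).factorial : ℝ))) :=
      Finset.sum_congr rfl fun x hx => by rw [hRl x (mem_range.mp hx)]
    rw [hfirst, sub_mul, Finset.sum_mul]
    have hW : ∀ x, x < j →
        fallingFactorial (2 * ((n:ℝ) - 2 * ↑(d + j) + ↑j - ↑x)) (2 * (j - x)) /
            fallingFactorial (2 * ((j:ℝ) - ↑x)) (2 * (j - x)) *
          (((2*μ).factorial : ℝ) / (2^μ * (μ.factorial : ℝ))) =
        ((2*(j-x) + 2*μ).factorial : ℝ) / (2^μ * (μ.factorial : ℝ) * ((2*(j-x)).factorial : ℝ)) := by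
      intro x hx
      have e1 : fallingFactorial (2 * ((n:ℝ) - 2 * ↑(d + j) + ↑j - ↑x)) (2 * (j - x)) =
          fallingFactorial (((2*μ : ℕ) : ℝ) + ↑(2*(j-x))) (2*(j-x)) := by
        congr 1
        push_cast [hn, Nat.cast_sub (le_of_lt hx)]
        ring
      have e2 : fallingFactorial (2 * ((j:ℝ) - ↑x)) (2 * (j - x)) =
          fallingFactorial ((((2*(j-x)) : ℕ) : ℝ)) (2*(j-x)) := by
        congr 1
        push_cast [Nat.cast_sub (le_of_lt hx)]
        ring
      rw [e1, e2, ff_nat_div (2*(j-x)) (2*μ), ff_cast_nat]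
      field_simp
      ring_nf
    have hs : ∑ x ∈ range j,
          (fallingFactorial (2 * ((n:ℝ) - 2 * ↑(d + j) + ↑j - ↑x)) (2 * (j - x)) /
              fallingFactorial (2 * ((j:ℝ) - ↑x)) (2 * (j - x)) * α n (d + x) x) *
          (((2*μ).factorial : ℝ) / (2^μ * (μ.factorial : ℝ))) =
        ∑ x ∈ range j, α n (d + x) x *
          ((2*(j-x) + 2*μ).factorial / (2^μ * (μ.factorial : ℝ) * ((2*(j-x)).factorial : ℝ))) :=
      Finset.sum_congr rfl fun x hx => by rw [← hW x (mem_range.mp hx)]; ring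
    rw [show 2*j + 2*(μ+d) = 2*(d+j+μ) from by ring, show μ + d = d + μ from by ring]
    linear_combination hs - hT

section Alpha
variable (α : ℕ → ℕ → ℕ → ℝ)
variable (hα : ∀ n k i : ℕ, 2 * k ≤ n → 2 * i ≤ 2 * k →
      α n k i =
        2 ^ (k + i) * fallingFactorial ((n : ℝ) - k + i - 1 / 2) (k - i) *
            fallingFactorial ((n : ℝ) - k) i *
            fallingFactorial ((n : ℝ) - 2 * k + 2 * i - 1 / 2) (2 * i) /
          (fallingFactorial ((2 * i : ℕ) : ℝ) (2 * i) *
            fallingFactorial ((n : ℝ) - k + i - 1 / 2) i) -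
        ∑ l ∈ Finset.range i,
          (fallingFactorial (2 * ((n : ℝ) - 2 * k + i - l)) (2 * (i - l)) /
              fallingFactorial (2 * ((i : ℝ) - l)) (2 * (i - l))) * α n (k - i + l) l)

include hα

lemma alpha_zero (n : ℕ) : α n 0 0 = 1 := by
  rw [hα n 0 0 (by omega) (by omega)]
  simp [ff_zero]

lemma alpha_diag (n : ℕ) : ∀ K, 2*K ≤ n → α n K K = if K = 0 then 1 else 0 := by
  intro K
  induction K using Nat.strong_induction_on with
  | _ K ih =>
    intro hK
    rcases Nat.eq_zero_or_pos K with rfl | hpos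
    · rw [if_pos rfl]; exact alpha_zero α hα n
    · rw [if_neg (by omega)]
      obtain ⟨e, he⟩ : ∃ e, n = e + 2*K := ⟨n - 2*K, by omega⟩
      rw [hα n K K (by omega) le_rfl]
      rw [Finset.sum_eq_single_of_mem 0 (by simp; omega) ?hside]
      case hside =>
        intro l hl hl0
        simp only [mem_range] at hl
        rw [show K - K + l = l from by omega, ih l hl (by omega), if_neg hl0, mul_zero]
      rw [show K - K + 0 = 0 from by omega, alpha_zero α hα n, mul_one]
      simp only [Nat.sub_zero, Nat.sub_self, Nat.cast_zero, sub_zero, ff_zero, mul_one]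
      have e2 : fallingFactorial ((n:ℝ) - ↑K) K = fallingFactorial (((e : ℕ):ℝ) + ↑K) K := by
        congr 1; push_cast [he]; ring
      have e3 : fallingFactorial ((n:ℝ) - 2*↑K + 2*↑K - 1/2) (2*K) =
          fallingFactorial (((e : ℕ):ℝ) + ((2*K : ℕ):ℝ) - 1/2) (2*K) := by
        congr 1; push_cast [he]; ring
      have e5 : fallingFactorial ((n:ℝ) - ↑K + ↑K - 1/2) K =
          fallingFactorial (((e+K : ℕ):ℝ) + ↑K - 1/2) K := by
        congr 1; push_cast [he]; ring
      have e6 : fallingFactorial (2*((n:ℝ) - 2*↑K + ↑K)) (2*K) =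
          fallingFactorial (((2*e : ℕ):ℝ) + ((2*K : ℕ):ℝ)) (2*K) := by
        congr 1; push_cast [he]; ring
      have e7 : fallingFactorial (2*((K:ℝ))) (2*K) =
          fallingFactorial (((2*K : ℕ):ℝ)) (2*K) := by
        congr 1; push_cast; ring
      rw [e2, e3, e5, e6, e7, ff_nat_div K e, ff_half_div (2*K) e, ff_half_div K (e+K),
        ff_nat_div (2*K) (2*e), ff_cast_nat]
      field_simp
      ring_nf
end Alpha

lemma iter_deriv_comp (lam : ℝ) (k : ℕ) : ∀ p : ℝ[X],
    derivative^[k] (p.comp (C lam * X)) = lam^k • ((derivative^[k] p).comp (C lam * X)) := by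
  induction k with
  | zero => intro p; simp
  | succ k ih =>
    intro p
    rw [Function.iterate_succ_apply, Function.iterate_succ_apply]
    have h1 : derivative (p.comp (C lam * X)) = C lam * (derivative p).comp (C lam * X) := by
      rw [Polynomial.derivative_comp]
      simp
    rw [h1, Polynomial.iterate_derivative_C_mul, ih (derivative p), smul_eq_C_mul,
      smul_eq_C_mul, ← mul_assoc, ← C_mul, pow_succ]
    ring_nf

lemma Rod_unnorm (j : ℕ) :
    derivative^[j] (((X:ℝ[X])^2-1)^j) = C ((2:ℝ)^j * j.factorial) * Rod j := by
  unfold Rod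
  rw [← mul_assoc, ← C_mul,
    show (2:ℝ)^j * j.factorial * (1/(2^j * j.factorial)) = 1 from by
      field_simp, C_1, one_mul]

lemma comp_expand (lam : ℝ) (n : ℕ) :
    (((X:ℝ[X])^2-1)^n).comp (C lam * X) =
      ∑ j ∈ range (n+1), C ((lam^2)^j * (lam^2-1)^(n-j) * (n.choose j : ℝ)) * ((X:ℝ[X])^2-1)^j := by
  rw [pow_comp]
  have h1 : ((X:ℝ[X])^2-1).comp (C lam * X) = C (lam^2) * ((X:ℝ[X])^2-1) + C (lam^2-1) := by
    simp only [sub_comp, pow_comp, X_comp, one_comp, map_sub, map_pow, map_one, map_mul]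
    ring
  rw [h1, add_pow]
  refine Finset.sum_congr rfl fun j hj => ?_
  have h2 : ((n.choose j : ℝ[X])) = C ((n.choose j : ℝ)) := by simp
  rw [h2, mul_pow, ← C_pow, ← C_pow, C_mul, C_mul]
  ring

lemma legA (lam : ℝ) (hlam : lam ≠ 0) (n : ℕ) :
    (Rod n).comp (C lam * X) = ∑ k ∈ range (n/2 + 1),
      C (lam^(n - 2*k) * (lam^2 - 1)^k / (2^k * (k.factorial : ℝ))) *
        derivative^[k] (Rod (n - k)) := by
  apply smul_right_injective ℝ[X] (pow_ne_zero n hlam)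
  show lam^n • _ = lam^n • _
  have lhs1 : lam^n • ((Rod n).comp (C lam * X)) =
      C (1 / (2 ^ n * (n.factorial : ℝ))) *
        derivative^[n] ((((X:ℝ[X])^2-1)^n).comp (C lam * X)) := by
    unfold Rod
    rw [mul_comp, C_comp, iter_deriv_comp lam n, smul_eq_C_mul, smul_eq_C_mul]
    ring
  rw [lhs1, comp_expand, Polynomial.iterate_derivative_sum]
  have hterm : ∀ j,
      derivative^[n] (C ((lam^2)^j * (lam^2-1)^(n-j) * (n.choose j : ℝ)) * ((X:ℝ[X])^2-1)^j) =
      C ((lam^2)^j * (lam^2-1)^(n-j) * (n.choose j : ℝ)) * derivative^[n] (((X:ℝ[X])^2-1)^j) :=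
    fun j => Polynomial.iterate_derivative_C_mul _ _ _
  simp only [hterm]
  rw [Finset.mul_sum, ← Finset.sum_range_reflect]
  simp only [Nat.add_sub_cancel]
  rw [← Finset.sum_subset (Finset.range_subset_range.mpr (by omega : n/2 + 1 ≤ n + 1)) ?hzero]
  case hzero =>
    intro k hk hnk
    simp only [mem_range] at hk hnk
    have hdeg : ((((X:ℝ[X])^2-1))^(n - k)).natDegree < n := by
      refine lt_of_le_of_lt (natDegree_pow_le.trans ?_) (by omega : 2*(n - k) < n)
      · have h2 : ((X:ℝ[X]) ^ 2 - 1).natDegree ≤ 2 := by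
          refine (natDegree_sub_le _ _).trans ?_
          simp [natDegree_X_pow]
        calc (n - k) * ((X:ℝ[X])^2-1).natDegree ≤ (n - k) * 2 :=
              Nat.mul_le_mul_left _ h2
          _ = 2*(n - k) := by ring
    rw [Polynomial.iterate_derivative_eq_zero hdeg]
    ring
  rw [Finset.smul_sum]
  refine Finset.sum_congr rfl fun k hk => ?_
  simp only [mem_range] at hk
  have hkn : 2*k ≤ n := by omega
  have hnn : n - (n - k) = k := by omega
  rw [hnn]
  have hkey : ∀ m, n = k + m → derivative^[n] (((X:ℝ[X])^2-1)^m) =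
      C ((2:ℝ)^m * (m.factorial : ℝ)) * derivative^[k] (Rod m) := by
    intro m hm
    rw [hm, Function.iterate_add_apply, Rod_unnorm m, Polynomial.iterate_derivative_C_mul]
  have hsplit := hkey (n - k) (by omega)
  rw [hsplit, smul_eq_C_mul]
  simp only [← mul_assoc, ← C_mul]
  congr 1
  have hch : ((n.choose (n-k) : ℝ)) * ((n-k).factorial : ℝ) * (k.factorial : ℝ) = (n.factorial : ℝ) := by
    have := Nat.choose_mul_factorial_mul_factorial (show n - k ≤ n from by omega)
    have h2 : n - (n - k) = k := by omega
    rw [h2] at this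
    exact_mod_cast congrArg (Nat.cast : ℕ → ℝ) this
  have hpow : ((lam^2)^(n-k) : ℝ) = lam^n * lam^(n-2*k) := by
    rw [← pow_mul, ← pow_add]
    congr 1
    omega
  rw [hpow]
  have h2p : (2:ℝ)^(n-k) * 2^k = 2^n := by rw [← pow_add]; congr 1; omega
  rw [C_inj]
  field_simp
  linear_combination ((lam^2-1)^k * 2^k * 2^(n-k)) * hch +
    ((lam^2-1)^k * (n.factorial : ℝ)) * h2p
lemma tri_swap (M : ℕ) (G : ℕ → ℕ → ℝ) :
    ∑ k ∈ range (M+1), ∑ i ∈ range (M-k+1), G k i =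
    ∑ K ∈ range (M+1), ∑ i ∈ range (K+1), G (K-i) i := by
  rw [Finset.sum_sigma', Finset.sum_sigma']
  refine Finset.sum_nbij' (fun p : (Σ _ : ℕ, ℕ) => (⟨p.1+p.2, p.2⟩ : Σ _ : ℕ, ℕ))
    (fun p : (Σ _ : ℕ, ℕ) => (⟨p.1-p.2, p.2⟩ : Σ _ : ℕ, ℕ)) ?_ ?_ ?_ ?_ ?_
  · rintro ⟨a, b⟩ hab
    simp only [Finset.mem_sigma, mem_range] at *
    omega
  · rintro ⟨a, b⟩ hab
    simp only [Finset.mem_sigma, mem_range] at *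
    omega
  · rintro ⟨a, b⟩ hab
    simp only [Finset.mem_sigma, mem_range] at hab
    show (⟨a + b - b, b⟩ : Σ _ : ℕ, ℕ) = ⟨a, b⟩
    rw [show a + b - b = a from by omega]
  · rintro ⟨a, b⟩ hab
    simp only [Finset.mem_sigma, mem_range] at hab
    show (⟨a - b + b, b⟩ : Σ _ : ℕ, ℕ) = ⟨a, b⟩
    rw [show a - b + b = a from by omega]
  · rintro ⟨a, b⟩ hab
    simp only [Finset.mem_sigma, mem_range] at hab
    simp only [Nat.add_sub_cancel]

theorem legendre_scaling_legendre_expansion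
    (α : ℕ → ℕ → ℕ → ℝ)
    (hα : ∀ n k i : ℕ, 2 * k ≤ n → 2 * i ≤ 2 * k →
      α n k i =
        2 ^ (k + i) * fallingFactorial ((n : ℝ) - k + i - 1 / 2) (k - i) *
            fallingFactorial ((n : ℝ) - k) i *
            fallingFactorial ((n : ℝ) - 2 * k + 2 * i - 1 / 2) (2 * i) /
          (fallingFactorial ((2 * i : ℕ) : ℝ) (2 * i) *
            fallingFactorial ((n : ℝ) - k + i - 1 / 2) i) -
        ∑ l ∈ Finset.range i,
          (fallingFactorial (2 * ((n : ℝ) - 2 * k + i - l)) (2 * (i - l)) /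
              fallingFactorial (2 * ((i : ℝ) - l)) (2 * (i - l))) * α n (k - i + l) l) :
    ∀ (n : ℕ) (lam : ℝ) (x : ℝ),
      legendre n (lam * x) =
        ∑ k ∈ Finset.range (n / 2 + 1),
          (∑ i ∈ Finset.range (max (k - 1) 0 + 1),
              (lam ^ (n - 2 * k + 2 * i) / (2 ^ (k - i) * ((k - i).factorial : ℝ))) *
                (lam ^ 2 - 1) ^ (k - i) * α n k i) *
            legendre (n - 2 * k) x := by
  intro n lam x
  -- first, the case lam ≠ 0
  have main : ∀ t : ℝ, t ≠ 0 →
      legendre n (t * x) =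
        ∑ k ∈ Finset.range (n / 2 + 1),
          (∑ i ∈ Finset.range (max (k - 1) 0 + 1),
              (t ^ (n - 2 * k + 2 * i) / (2 ^ (k - i) * ((k - i).factorial : ℝ))) *
                (t ^ 2 - 1) ^ (k - i) * α n k i) *
            legendre (n - 2 * k) x := by
    intro t ht
    rw [legendre_eq_Rod]
    have h1 : (t * x) = (C t * X : ℝ[X]).eval x := by simp
    rw [h1, ← eval_comp, legA t ht n, eval_finset_sum]
    have hterm : ∀ k ∈ range (n/2 + 1),
        (C (t^(n - 2*k) * (t^2 - 1)^k / (2^k * (k.factorial : ℝ))) *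
          derivative^[k] (Rod (n - k))).eval x =
        ∑ i ∈ range (n/2 - k + 1),
          (t^(n - 2*k) * (t^2 - 1)^k / (2^k * (k.factorial : ℝ))) *
            (α n (k+i) i * (Rod (n - 2*k - 2*i)).eval x) := by
      intro k hk
      simp only [mem_range] at hk
      rw [eval_mul, eval_C, legB α hα n k (by omega), eval_finset_sum]
      rw [show (n - 2*k)/2 = n/2 - k from by omega, Finset.mul_sum]
      refine Finset.sum_congr rfl fun i hi => ?_
      rw [eval_smul, smul_eq_mul]
    rw [Finset.sum_congr rfl hterm, tri_swap (n/2)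
      (fun k i => (t^(n - 2*k) * (t^2 - 1)^k / (2^k * (k.factorial : ℝ))) *
        (α n (k+i) i * (Rod (n - 2*k - 2*i)).eval x))]
    refine Finset.sum_congr rfl fun K hK => ?_
    simp only [mem_range] at hK
    have hKn : 2*K ≤ n := by omega
    -- normalize the summand
    have hsummand : ∀ i, i ≤ K →
        (t^(n - 2*(K-i)) * (t^2 - 1)^(K-i) / (2^(K-i) * ((K-i).factorial : ℝ))) *
          (α n ((K-i)+i) i * (Rod (n - 2*(K-i) - 2*i)).eval x) =
        ((t ^ (n - 2 * K + 2 * i) / (2 ^ (K - i) * ((K - i).factorial : ℝ))) *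
            (t ^ 2 - 1) ^ (K - i) * α n K i) * (Rod (n - 2*K)).eval x := by
      intro i hi
      rw [show (K-i)+i = K from by omega, show n - 2*(K-i) - 2*i = n - 2*K from by omega,
        show n - 2*(K-i) = n - 2*K + 2*i from by omega]
      ring
    rw [legendre_eq_Rod (n - 2*K) x]
    rcases Nat.eq_zero_or_pos K with rfl | hKpos
    · simp only [Finset.sum_range_one, Finset.sum_range_succ]
      rw [hsummand 0 le_rfl]
      simp
    · have hmax : max (K-1) 0 + 1 = K := by omega
      rw [hmax, Finset.sum_range_succ, hsummand K le_rfl,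
        alpha_diag α hα n K (by omega), if_neg (by omega)]
      rw [Finset.sum_congr rfl (fun i hi => hsummand i (by simp at hi; omega)), ← Finset.sum_mul]
      ring
  rcases eq_or_ne lam 0 with rfl | hlam
  · -- continuity argument
    have hf : Continuous fun t : ℝ => legendre n (t * x) := by
      have : (fun t : ℝ => legendre n (t * x)) = fun t => (Rod n).eval (t * x) :=
        funext fun t => legendre_eq_Rod n (t * x)
      rw [this]
      exact (Rod n).continuous.comp (continuous_id.mul continuous_const)
    have hg : Continuous fun t : ℝ =>
        ∑ k ∈ Finset.range (n / 2 + 1),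
          (∑ i ∈ Finset.range (max (k - 1) 0 + 1),
              (t ^ (n - 2 * k + 2 * i) / (2 ^ (k - i) * ((k - i).factorial : ℝ))) *
                (t ^ 2 - 1) ^ (k - i) * α n k i) *
            legendre (n - 2 * k) x := by
      refine continuous_finset_sum _ fun k _ => Continuous.mul ?_ continuous_const
      refine continuous_finset_sum _ fun i _ => Continuous.mul (Continuous.mul ?_ ?_)
        continuous_const
      · exact (continuous_pow _).div_const _
      · exact Continuous.pow ((continuous_pow 2).sub continuous_const) _
    have heq := Continuous.ext_on (dense_compl_singleton (0:ℝ)) hf hg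
      (fun t ht => main t (Set.mem_compl_singleton_iff.mp ht))
    exact congrFun heq 0
  · exact main lam hlam
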